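/- Let Φ : ℝ → ℝ be convex and assume s ↦ exp(−Φ(s)) is integrable on (−∞, z) for every z ∈ ℝ. Then the function ℓ₁ : ℝ → ℝ defined by ℓ₁(z) = −log( ∫_{(−∞,z)} exp(−Φ(s)) ds ) is convex on ℝ. -/

import Mathlib

open MeasureTheory

open Set

lemma key_pt (Φ : ℝ → ℝ) (hΦ : ConvexOn ℝ Set.univ Φ) {s x y : ℝ} (hsx : s ≤ x) (hxy : x ≤ y) :
    Real.exp (-Φ y) * Real.exp (-Φ s) ≤ Real.exp (-Φ x) * Real.exp (-Φ (s + y - x)) := by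
  rcases eq_or_lt_of_le (hsx.trans hxy) with h | h
  · have hx : s = x := le_antisymm hsx (h ▸ hxy)
    subst h; subst hx
    simp
  · set lam : ℝ := (y - x) / (y - s) with hlam
    have hys : 0 < y - s := by linarith
    have hl0 : 0 ≤ lam := div_nonneg (by linarith) hys.le
    have hl1 : lam ≤ 1 := (div_le_one hys).2 (by linarith)
    have hx' : lam * s + (1 - lam) * y = x := by
      have hm : lam * (y - s) = y - x := by rw [hlam]; exact div_mul_cancel₀ _ hys.ne'
      linear_combination -hm
    have hy' : (1 - lam) * s + lam * y = s + y - x := by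
      have hm : lam * (y - s) = y - x := by rw [hlam]; exact div_mul_cancel₀ _ hys.ne'
      linear_combination hm
    have c1 := hΦ.2 (mem_univ s) (mem_univ y) hl0 (by linarith) (by ring : lam + (1 - lam) = 1)
    have c2 := hΦ.2 (mem_univ s) (mem_univ y) (by linarith : (0:ℝ) ≤ 1 - lam) hl0
      (by ring : 1 - lam + lam = 1)
    simp only [smul_eq_mul] at c1 c2
    rw [hx'] at c1
    rw [hy'] at c2
    rw [← Real.exp_add, ← Real.exp_add]
    exact Real.exp_le_exp.2 (by linarith)


/-- For convex `Φ` with `exp(−Φ)` integrable on every `(−∞, z)`,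
the function `ℓ₁(z) = −log(∫_{(−∞,z)} exp(−Φ(s)) ds)` is convex on ℝ. -/
theorem stmt_7 (Φ : ℝ → ℝ) (hΦ : ConvexOn ℝ Set.univ Φ)
    (hint : ∀ z : ℝ, IntegrableOn (fun s => Real.exp (-Φ s)) (Set.Iio z)) :
    ConvexOn ℝ Set.univ
      (fun z : ℝ => -Real.log (∫ s in Set.Iio z, Real.exp (-Φ s))) := by
  set f : ℝ → ℝ := fun s => Real.exp (-Φ s) with hf
  set F : ℝ → ℝ := fun z => ∫ s in Iio z, f s with hF
  have hΦc : Continuous Φ := by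
    have := hΦ.continuousOn isOpen_univ
    rwa [continuousOn_univ] at this
  have hfc : Continuous f := by rw [hf]; exact (hΦc.neg).rexp
  have hfpos : ∀ s, 0 < f s := fun s => Real.exp_pos _
  have hFpos : ∀ z, 0 < F z := by
    intro z
    rw [hF]
    refine (setIntegral_pos_iff_support_of_nonneg_ae
      (Filter.Eventually.of_forall fun s => (hfpos s).le) (hint z)).2 ?_
    have hsupp : Function.support f ∩ Iio z = Iio z :=
      inter_eq_self_of_subset_right fun x _ => (hfpos x).ne'
    rw [hsupp]
    simp
  have hIic : ∀ a : ℝ, IntegrableOn f (Iic a) := fun a =>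
    (hint (a + 1)).mono_set (Iic_subset_Iio.2 (lt_add_one a))
  have hii : ∀ a b : ℝ, IntervalIntegrable f volume a b := fun a b =>
    ((hIic (max a b)).mono_set fun x hx => hx.2).intervalIntegrable
  have hFIic : ∀ w : ℝ, F w = ∫ s in Iic w, f s := fun w => integral_Iic_eq_integral_Iio.symm
  have hFrepr : ∀ z : ℝ, F z = F 0 + ∫ s in (0:ℝ)..z, f s := by
    intro z
    rw [hFIic z, hFIic 0, ← intervalIntegral.integral_Iic_sub_Iic (hIic 0) (hIic z)]
    ring
  have hFderiv : ∀ z : ℝ, HasDerivAt F (f z) z := by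
    intro z
    have h := intervalIntegral.integral_hasDerivAt_right (hii 0 z)
      (hfc.stronglyMeasurableAtFilter _ _) (hfc.continuousAt (x := z))
    exact (h.const_add (F 0)).congr_of_eventuallyEq
      (Filter.Eventually.of_forall fun u => (hFrepr u))
  set L : ℝ → ℝ := fun z => -Real.log (F z) with hL
  have hLderiv : ∀ z : ℝ, HasDerivAt L (-(f z / F z)) z := fun z =>
    ((hFderiv z).log (hFpos z).ne').neg
  -- translation machinery
  have hemb : ∀ c : ℝ, MeasurableEmbedding (fun s : ℝ => s + c) := fun c =>
    (Homeomorph.addRight c).measurableEmbedding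
  have hmpr : ∀ x c : ℝ, MeasurePreserving (fun s : ℝ => s + c)
      (volume.restrict (Iio x)) (volume.restrict (Iio (x + c))) := by
    intro x c
    have hpre : (fun s : ℝ => s + c) ⁻¹' Iio (x + c) = Iio x := by ext s; simp
    refine ⟨measurable_add_const c, ?_⟩
    conv_rhs => rw [← (measurePreserving_add_right volume c).map_eq]
    rw [Measure.restrict_map (measurable_add_const c) measurableSet_Iio, hpre]
  have htrans : ∀ x c : ℝ, ∫ s in Iio x, f (s + c) = ∫ s in Iio (x + c), f s := by
    intro x c
    have := (measurePreserving_add_right volume c).setIntegral_preimage_emb (hemb c) f (Iio (x + c))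
    have hpre : (fun s : ℝ => s + c) ⁻¹' Iio (x + c) = Iio x := by ext s; simp
    rwa [hpre] at this
  have htransInt : ∀ x c : ℝ, IntegrableOn (fun s => f (s + c)) (Iio x) := by
    intro x c
    have := ((hmpr x c).integrable_comp_emb (hemb c) (g := f)).2 (hint (x + c))
    exact this
  -- monotonicity of the derivative
  have hmono : ∀ x y : ℝ, x ≤ y → f y * F x ≤ f x * F y := by
    intro x y hxy
    have h1 : f y * F x = ∫ s in Iio x, f y * f s := by
      rw [integral_const_mul]
    have h2 : f x * F y = ∫ s in Iio x, f x * f (s + (y - x)) := by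
      rw [integral_const_mul, htrans x (y - x)]
      congr 2
      ring
    rw [h1, h2]
    refine setIntegral_mono_on ((hint x).const_mul _)
      ((htransInt x (y - x)).const_mul _) measurableSet_Iio ?_
    intro s hs
    have := key_pt Φ hΦ (le_of_lt hs) hxy
    calc f y * f s ≤ f x * f (s + y - x) := this
    _ = f x * f (s + (y - x)) := by ring_nf
  have hderivL : deriv L = fun z => -(f z / F z) := funext fun z => (hLderiv z).deriv
  refine MonotoneOn.convexOn_of_deriv convex_univ ?_ ?_ ?_
  · exact (continuous_iff_continuousAt.2 fun z =>
      (hLderiv z).differentiableAt.continuousAt).continuousOn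
  · rw [interior_univ]
    exact fun z _ => (hLderiv z).differentiableAt.differentiableWithinAt
  · rw [interior_univ]
    intro x _ y _ hxy
    rw [hderivL]
    simp only [neg_le_neg_iff]
    rw [div_le_div_iff₀ (hFpos y) (hFpos x)]
    exact hmono x y hxy
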